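/- For every permutation w in the symmetric group S_n, there exists a unique reduced word for w that is super-Yamanouchi, i.e., whose run decomposition into maximal decreasing (right-to-left) runs consists of integer intervals with strictly decreasing minima from right to left. -/

import Mathlib

/-- The simple transposition `s i` of `i` and `i+1` (0-indexed) in `S_n`,
the identity if out of range. -/
def st (n : ℕ) (i : ℕ) : Equiv.Perm (Fin n) :=
  if h : i + 1 < n then Equiv.swap ⟨i, Nat.lt_of_succ_lt h⟩ ⟨i + 1, h⟩ else 1

/-- The Coxeter length of `w`: the number of inversion pairs. -/
def invCount {n : ℕ} (w : Equiv.Perm (Fin n)) : ℕ :=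
  (Finset.univ.filter fun p : Fin n × Fin n => p.1 < p.2 ∧ w p.2 < w p.1).card

/-- The permutation `s_{ρ_ℓ} ⋯ s_{ρ_1}` of a word `L = (ρ_ℓ, …, ρ_1)`,
where `s_{ρ_1}` is applied first (by swapping positions of the one-line notation). -/
def wordProd (n : ℕ) (L : List ℕ) : Equiv.Perm (Fin n) :=
  (L.reverse.map (st n)).prod

/-- `L = (ρ_ℓ, …, ρ_1)` is a reduced word for `w`. -/
def IsReducedWord (n : ℕ) (w : Equiv.Perm (Fin n)) (L : List ℕ) : Prop :=
  (∀ a ∈ L, a + 1 < n) ∧ wordProd n L = w ∧ L.length = invCount w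

/-- A word is super-Yamanouchi if its run decomposition into maximal runs
(increasing left to right as displayed, i.e. decreasing right to left) consists of
intervals of consecutive integers whose minima strictly decrease from left to right
(i.e. `min ρ^(k) > ⋯ > min ρ^(1)`).  Since runs here are intervals with strictly
decreasing minima, such a decomposition is automatically the maximal run decomposition. -/
def SuperYamanouchi (L : List ℕ) : Prop :=
  ∃ R : List (List ℕ),
    R.flatten = L ∧
    (∀ r ∈ R, r ≠ [] ∧ r.Chain' (fun a b => b = a + 1)) ∧
    (R.map fun r => r.headD 0).Chain' (fun a b => b < a)

lemma Equiv.Perm.apply_inv_self {α : Type*} (f : Equiv.Perm α) (x : α) : f (f⁻¹ x) = x := by simp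

lemma Equiv.Perm.inv_apply_self {α : Type*} (f : Equiv.Perm α) (x : α) : f⁻¹ (f x) = x := by simp

-- basic st facts
lemma st_apply_val {n i : ℕ} (h : i + 1 < n) (x : Fin n) :
    ((st n i x : Fin n) : ℕ) = if (x:ℕ) = i then i+1 else if (x:ℕ) = i+1 then i else x := by
  rw [st, dif_pos h, Equiv.swap_apply_def]
  split_ifs with h1 h2 h3 h4 h5 <;>
    simp_all [Fin.ext_iff] <;> omega

lemma st_apply_of_out {n i : ℕ} (x : Fin n) (hx1 : (x:ℕ) ≠ i) (hx2 : (x:ℕ) ≠ i+1) :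
    st n i x = x := by
  by_cases h : i + 1 < n
  · have := st_apply_val h x
    rw [if_neg hx1, if_neg hx2] at this
    exact Fin.ext this
  · rw [st, dif_neg h]; rfl

lemma wordProd_nil (n : ℕ) : wordProd n [] = 1 := rfl

lemma wordProd_append (n : ℕ) (A B : List ℕ) :
    wordProd n (A ++ B) = wordProd n B * wordProd n A := by
  simp [wordProd, List.reverse_append]

lemma wordProd_cons (n : ℕ) (x : ℕ) (L : List ℕ) :
    wordProd n (x :: L) = wordProd n L * st n x := by
  have : x :: L = [x] ++ L := rfl
  rw [this, wordProd_append]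
  simp [wordProd]

lemma wordProd_concat (n : ℕ) (L : List ℕ) (x : ℕ) :
    wordProd n (L ++ [x]) = st n x * wordProd n L := by
  rw [wordProd_append]
  simp [wordProd]

-- words with all letters > b fix points ≤ b
lemma wordProd_fix {n : ℕ} {L : List ℕ} {b : ℕ} (hL : ∀ l ∈ L, b < l) :
    ∀ x : Fin n, (x:ℕ) ≤ b → wordProd n L x = x := by
  induction L with
  | nil => intro x _; rfl
  | cons l L ih =>
    intro x hx
    rw [wordProd_cons, Equiv.Perm.mul_apply]
    have hbl := hL l (by simp)
    rw [st_apply_of_out x (by omega) (by omega)]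
    exact ih (fun l hl => hL l (by simp [hl])) x hx

section Key
variable {n i : ℕ} (h : i + 1 < n)

-- swap preserves order except on the designated pair
lemma st_lt_of_lt {a b : Fin n} (hab : a < b) (hne : ¬((a:ℕ) = i ∧ (b:ℕ) = i+1)) :
    st n i a < st n i b := by
  by_cases h : i + 1 < n
  · rw [Fin.lt_def, st_apply_val h, st_apply_val h]
    rw [Fin.lt_def] at hab
    split_ifs <;> omega
  · rw [st, dif_neg h]; exact hab

lemma st_fi (h : i + 1 < n) : st n i ⟨i, Nat.lt_of_succ_lt h⟩ = ⟨i+1, h⟩ := by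
  rw [st, dif_pos h]; exact Equiv.swap_apply_left _ _

lemma st_fi1 (h : i + 1 < n) : st n i ⟨i+1, h⟩ = ⟨i, Nat.lt_of_succ_lt h⟩ := by
  rw [st, dif_pos h]; exact Equiv.swap_apply_right _ _

-- the key counting lemma
lemma invCount_st_mul (h : i + 1 < n) (u : Equiv.Perm (Fin n)) :
    (u⁻¹ ⟨i, Nat.lt_of_succ_lt h⟩ < u⁻¹ ⟨i+1, h⟩ ∧
      invCount (st n i * u) = invCount u + 1) ∨
    (u⁻¹ ⟨i+1, h⟩ < u⁻¹ ⟨i, Nat.lt_of_succ_lt h⟩ ∧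
      invCount u = invCount (st n i * u) + 1) := by
  set fi : Fin n := ⟨i, Nat.lt_of_succ_lt h⟩ with hfi
  set fi1 : Fin n := ⟨i+1, h⟩ with hfi1
  have hlt : fi < fi1 := by simp [Fin.lt_def, hfi, hfi1]
  set p := u⁻¹ fi with hp
  set q := u⁻¹ fi1 with hq
  have hup : u p = fi := Equiv.Perm.apply_inv_self u fi
  have huq : u q = fi1 := Equiv.Perm.apply_inv_self u fi1
  have hpq : p ≠ q := by
    intro e; rw [e, huq] at hup; exact absurd hup (by simp [hfi, hfi1, Fin.ext_iff])
  rcases lt_or_gt_of_ne hpq with hc | hc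
  · left
    refine ⟨hc, ?_⟩
    have hset : (Finset.univ.filter fun pr : Fin n × Fin n =>
        pr.1 < pr.2 ∧ (st n i * u) pr.2 < (st n i * u) pr.1) =
        insert (p, q) (Finset.univ.filter fun pr : Fin n × Fin n =>
          pr.1 < pr.2 ∧ u pr.2 < u pr.1) := by
      ext ⟨x, y⟩
      simp only [Finset.mem_insert, Finset.mem_filter, Finset.mem_univ, true_and,
        Prod.mk.injEq]
      simp only [Equiv.Perm.mul_apply]
      constructor
      · rintro ⟨hxy, hs⟩
        rcases lt_trichotomy (u x) (u y) with hu | hu | hu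
        · by_cases he : (u x : ℕ) = i ∧ (u y : ℕ) = i + 1
          · left
            have hx : u x = fi := Fin.ext he.1
            have hy : u y = fi1 := Fin.ext he.2
            constructor
            · rw [hp, ← hx]; exact (Equiv.Perm.inv_apply_self u x).symm
            · rw [hq, ← hy]; exact (Equiv.Perm.inv_apply_self u y).symm
          · exact absurd (st_lt_of_lt hu he) (asymm hs)
        · exact absurd (u.injective hu) (ne_of_lt hxy)
        · exact Or.inr ⟨hxy, hu⟩
      · rintro (⟨hx, hy⟩ | ⟨hxy, hu⟩)
        · subst hx; subst hy
          refine ⟨hc, ?_⟩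
          rw [hup, huq, st_fi h, st_fi1 h]
          exact hlt
        · refine ⟨hxy, ?_⟩
          by_cases he : (u y : ℕ) = i ∧ (u x : ℕ) = i + 1
          · exfalso
            have hx : u x = fi1 := Fin.ext he.2
            have hy : u y = fi := Fin.ext he.1
            have : q < p := by
              rw [hp, hq, ← hx, ← hy, Equiv.Perm.inv_apply_self, Equiv.Perm.inv_apply_self]
              exact hxy
            exact absurd hc (asymm this)
          · exact st_lt_of_lt hu he
    have hnot : (p, q) ∉ (Finset.univ.filter fun pr : Fin n × Fin n =>
        pr.1 < pr.2 ∧ u pr.2 < u pr.1) := by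
      simp only [Finset.mem_filter, Finset.mem_univ, true_and, not_and]
      intro _
      rw [hup, huq]
      exact asymm hlt
    rw [invCount, invCount, hset, Finset.card_insert_of_notMem hnot]
  · right
    refine ⟨hc, ?_⟩
    have hset : (Finset.univ.filter fun pr : Fin n × Fin n =>
        pr.1 < pr.2 ∧ u pr.2 < u pr.1) =
        insert (q, p) (Finset.univ.filter fun pr : Fin n × Fin n =>
          pr.1 < pr.2 ∧ (st n i * u) pr.2 < (st n i * u) pr.1) := by
      ext ⟨x, y⟩
      simp only [Finset.mem_insert, Finset.mem_filter, Finset.mem_univ, true_and,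
        Prod.mk.injEq]
      simp only [Equiv.Perm.mul_apply]
      constructor
      · rintro ⟨hxy, hu⟩
        by_cases he : (u y : ℕ) = i ∧ (u x : ℕ) = i + 1
        · left
          have hx : u x = fi1 := Fin.ext he.2
          have hy : u y = fi := Fin.ext he.1
          constructor
          · rw [hq, ← hx]; exact (Equiv.Perm.inv_apply_self u x).symm
          · rw [hp, ← hy]; exact (Equiv.Perm.inv_apply_self u y).symm
        · exact Or.inr ⟨hxy, st_lt_of_lt hu he⟩
      · rintro (⟨hx, hy⟩ | ⟨hxy, hs⟩)
        · subst hx; subst hy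
          refine ⟨hc, ?_⟩
          rw [hup, huq]
          exact hlt
        · refine ⟨hxy, ?_⟩
          rcases lt_trichotomy (u y) (u x) with hu | hu | hu
          · exact hu
          · exact absurd (u.injective hu) (ne_of_lt hxy).symm
          · exfalso
            by_cases he : (u x : ℕ) = i ∧ (u y : ℕ) = i + 1
            · have hx : u x = fi := Fin.ext he.1
              have hy : u y = fi1 := Fin.ext he.2
              have : p < q := by
                rw [hp, hq, ← hx, ← hy, Equiv.Perm.inv_apply_self, Equiv.Perm.inv_apply_self]
                exact hxy
              exact absurd hc (asymm this)
            · exact absurd (st_lt_of_lt hu he) (asymm hs)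
    have hnot : (q, p) ∉ (Finset.univ.filter fun pr : Fin n × Fin n =>
        pr.1 < pr.2 ∧ (st n i * u) pr.2 < (st n i * u) pr.1) := by
      simp only [Finset.mem_filter, Finset.mem_univ, true_and, not_and]
      simp only [Equiv.Perm.mul_apply]
      intro _
      rw [hup, huq, st_fi h, st_fi1 h]
      exact asymm hlt
    rw [invCount, invCount, hset, Finset.card_insert_of_notMem hnot]

end Key

lemma invCount_one {n : ℕ} : invCount (1 : Equiv.Perm (Fin n)) = 0 := by
  rw [invCount, Finset.card_eq_zero, Finset.filter_eq_empty_iff]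
  rintro ⟨x, y⟩ _
  simp only [Equiv.Perm.one_apply, not_and]
  intro h1
  exact asymm h1

-- invCount of word product is at most the length
lemma invCount_wordProd_le (n : ℕ) (L : List ℕ) : invCount (wordProd n L) ≤ L.length := by
  induction L using List.reverseRecOn with
  | nil => simp [wordProd_nil, invCount_one]
  | append_singleton L x ih =>
    rw [wordProd_concat]
    by_cases h : x + 1 < n
    · rcases invCount_st_mul h (wordProd n L) with ⟨_, he⟩ | ⟨_, he⟩ <;> simp <;> omega
    · rw [st, dif_neg h, one_mul]
      simp; omega

-- the product of the run [a, a+1, ..., a+j-1]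
lemma runProd_spec (n a : ℕ) : ∀ j, ∀ hj : a + j < n,
    ((∀ x : Fin n, (x:ℕ) < a → wordProd n (List.range' a j) x = x) ∧
     (∀ x : Fin n, a + j < (x:ℕ) → wordProd n (List.range' a j) x = x) ∧
     (wordProd n (List.range' a j) ⟨a, by omega⟩ = ⟨a + j, by omega⟩)) := by
  intro j
  induction j with
  | zero => intro h; refine ⟨fun x _ => rfl, fun x _ => rfl, rfl⟩
  | succ j ih =>
    intro h
    obtain ⟨ih1, ih2, ih3⟩ := ih (by omega)
    have hcat : List.range' a (j+1) = List.range' a j ++ [a + j] := by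
      simpa using List.range'_concat (step := 1) (s := a) (n := j)
    rw [hcat, wordProd_concat]
    refine ⟨?_, ?_, ?_⟩
    · intro x hx
      rw [Equiv.Perm.mul_apply, ih1 x hx, st_apply_of_out x (by omega) (by omega)]
    · intro x hx
      rw [Equiv.Perm.mul_apply, ih2 x (by omega), st_apply_of_out x (by omega) (by omega)]
    · rw [Equiv.Perm.mul_apply, ih3]
      exact st_fi h

-- adding a run on the left of a permutation fixing 0..a adds exactly j inversions
lemma invCount_step_aux {n a j : ℕ} (haj : a + j + 1 < n) (w G : Equiv.Perm (Fin n))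
    (hw : ∀ x : Fin n, (x:ℕ) ≤ a → w x = x)
    (g1 : ∀ x : Fin n, (x:ℕ) < a → G x = x)
    (g3 : G ⟨a, by omega⟩ = ⟨a + j, Nat.lt_of_succ_lt haj⟩) :
    invCount (st n (a + j) * (G * w)) = invCount (G * w) + 1 := by
  have e1 : w ⟨a, by omega⟩ = ⟨a, by omega⟩ := hw ⟨a, by omega⟩ (le_refl a)
  have hua : (G * w) ⟨a, by omega⟩ = ⟨a + j, Nat.lt_of_succ_lt haj⟩ := by
    rw [Equiv.Perm.mul_apply, e1]
    exact g3
  have h1 : (G * w)⁻¹ ⟨a + j, Nat.lt_of_succ_lt haj⟩ = ⟨a, by omega⟩ := by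
    rw [Equiv.Perm.inv_eq_iff_eq]
    exact hua.symm
  have h2 : a < (((G * w)⁻¹ ⟨a + j + 1, haj⟩ : Fin n) : ℕ) := by
    by_contra hle
    push_neg at hle
    have e2 : w ((G * w)⁻¹ ⟨a + j + 1, haj⟩) = (G * w)⁻¹ ⟨a + j + 1, haj⟩ := hw _ hle
    have happ : (⟨a + j + 1, haj⟩ : Fin n) = G ((G * w)⁻¹ ⟨a + j + 1, haj⟩) := by
      conv_lhs => rw [← Equiv.Perm.apply_inv_self (G * w) ⟨a + j + 1, haj⟩]
      rw [Equiv.Perm.mul_apply, e2]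
    rcases eq_or_lt_of_le hle with heq | hlt
    · have hz : (G * w)⁻¹ ⟨a + j + 1, haj⟩ = ⟨a, by omega⟩ := Fin.ext heq
      rw [hz, g3] at happ
      have := congrArg Fin.val happ
      simp only [Fin.val_mk] at this
      omega
    · rw [g1 _ hlt] at happ
      have := congrArg Fin.val happ
      simp only [Fin.val_mk] at this
      omega
  rcases invCount_st_mul haj (G * w) with ⟨_, he⟩ | ⟨hcond, _⟩
  · exact he
  · exfalso
    rw [h1, Fin.lt_def] at hcond
    simp only [Fin.val_mk] at hcond
    omega

lemma invCount_run_mul {n a : ℕ} (w : Equiv.Perm (Fin n))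
    (hw : ∀ x : Fin n, (x:ℕ) ≤ a → w x = x) :
    ∀ j, ∀ hj : a + j < n,
      invCount (wordProd n (List.range' a j) * w) = invCount w + j := by
  intro j
  induction j with
  | zero => intro _; simp [wordProd_nil]
  | succ j ih =>
    intro h
    have haj : a + j + 1 < n := h
    have hinv : invCount (wordProd n (List.range' a j) * w) = invCount w + j :=
      ih (by omega)
    obtain ⟨g1, g2, g3⟩ := runProd_spec n a j (by omega)
    have hcat : List.range' a (j+1) = List.range' a j ++ [a + j] := by
      simpa using List.range'_concat (step := 1) (s := a) (n := j)
    rw [hcat, wordProd_concat, mul_assoc,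
      invCount_step_aux haj w (wordProd n (List.range' a j)) hw g1 g3, hinv]
    omega

-- least displaced point: if w ≠ 1 there is a least a with w a ≠ a, and w a > a
lemma exists_least_displaced {n : ℕ} {w : Equiv.Perm (Fin n)} (hw : w ≠ 1) :
    ∃ A : Fin n, w A ≠ A ∧ (A:ℕ) < (w A : ℕ) ∧ (∀ x : Fin n, (x:ℕ) < (A:ℕ) → w x = x) := by
  have hne : (Finset.univ.filter fun x : Fin n => w x ≠ x).Nonempty := by
    by_contra hc
    rw [Finset.not_nonempty_iff_eq_empty, Finset.filter_eq_empty_iff] at hc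
    apply hw
    ext x
    have := hc (Finset.mem_univ x)
    simp only [ne_eq, not_not] at this
    simp [this]
  set A := (Finset.univ.filter fun x : Fin n => w x ≠ x).min' hne with hA
  have hAmem : w A ≠ A := by
    have := (Finset.univ.filter fun x : Fin n => w x ≠ x).min'_mem hne
    simpa using this
  have hfix : ∀ x : Fin n, (x:ℕ) < (A:ℕ) → w x = x := by
    intro x hx
    by_contra hc
    have : A ≤ x := Finset.min'_le _ x (by simp [hc])
    rw [Fin.le_def] at this; omega
  refine ⟨A, hAmem, ?_, hfix⟩
  rcases lt_trichotomy ((w A : Fin n) : ℕ) ((A : Fin n) : ℕ) with hl | hl | hl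
  · exact absurd (w.injective (hfix (w A) hl)) hAmem
  · exact absurd (Fin.ext hl) hAmem
  · exact hl

lemma invCount_eq_zero_iff {n : ℕ} {w : Equiv.Perm (Fin n)} :
    invCount w = 0 ↔ w = 1 := by
  constructor
  · intro h0
    by_contra hw
    obtain ⟨A, hA, hlt, hfix⟩ := exists_least_displaced hw
    have hBA : (A:ℕ) < ((w⁻¹ A : Fin n) : ℕ) := by
      rcases lt_trichotomy ((w⁻¹ A : Fin n) : ℕ) ((A:ℕ)) with hl | hl | hl
      · have h1 : w (w⁻¹ A) = w⁻¹ A := hfix _ hl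
        rw [Equiv.Perm.apply_inv_self] at h1
        rw [← h1] at hl
        omega
      · have h1 : w⁻¹ A = A := Fin.ext hl
        have : w A = A := by
          conv_lhs => rw [← h1]
          exact Equiv.Perm.apply_inv_self w A
        exact absurd this hA
      · exact hl
    have hmem : (A, w⁻¹ A) ∈ (Finset.univ.filter fun p : Fin n × Fin n =>
        p.1 < p.2 ∧ w p.2 < w p.1) := by
      simp only [Finset.mem_filter, Finset.mem_univ, true_and]
      refine ⟨by rwa [Fin.lt_def], ?_⟩
      rw [Equiv.Perm.apply_inv_self, Fin.lt_def]
      exact hlt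
    rw [invCount, Finset.card_eq_zero] at h0
    rw [h0] at hmem
    exact absurd hmem (Finset.notMem_empty _)
  · rintro rfl; exact invCount_one

-- runs are intervals
lemma run_eq_range' : ∀ (t : List ℕ) (a : ℕ),
    List.Chain' (fun x y => y = x + 1) (a :: t) → a :: t = List.range' a (t.length + 1) := by
  intro t
  induction t with
  | nil => intro a _; rfl
  | cons b t ih =>
    intro a hc
    rw [List.Chain', List.isChain_cons_cons] at hc
    obtain ⟨hb, hc⟩ := hc
    subst hb
    have := ih (a + 1) hc
    rw [List.range'_succ]
    simp only [List.length_cons]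
    rw [← this]

lemma range'_chain (a : ℕ) : ∀ k, (List.range' a k).Chain' (fun x y => y = x + 1) := by
  have : ∀ k a, (List.range' a k).Chain' (fun x y => y = x + 1) := by
    intro k
    induction k with
    | zero => intro a; simp [List.Chain']
    | succ k ih =>
      intro a
      rw [List.range'_succ]
      cases k with
      | zero => simp [List.Chain']
      | succ k =>
        rw [List.range'_succ, List.Chain', List.isChain_cons_cons]
        exact ⟨rfl, by rw [← List.range'_succ]; exact ih (a+1)⟩
  exact fun k => this k a

lemma getLast?_mem' {α : Type*} {l : List α} {x : α} (h : x ∈ l.getLast?) : x ∈ l := by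
  obtain ⟨hne, rfl⟩ := List.mem_getLast?_eq_getLast h
  exact List.getLast_mem hne

lemma getLast?_map' {α β : Type*} (f : α → β) : ∀ l : List α,
    (l.map f).getLast? = (l.getLast?).map f := by
  intro l
  induction l with
  | nil => rfl
  | cons a t ih =>
    cases t with
    | nil => rfl
    | cons b t' => simpa [List.getLast?_cons_cons] using ih

lemma range'_ne_nil {a k : ℕ} (h : 1 ≤ k) : List.range' a k ≠ [] := by
  intro he
  have := congrArg List.length he
  simp at this
  omega

lemma headD_range' {a k : ℕ} (h : 1 ≤ k) : (List.range' a k).headD 0 = a := by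
  cases k with
  | zero => omega
  | succ k' => rw [List.range'_succ]; rfl

lemma existsSY (n : ℕ) : ∀ (N : ℕ) (w : Equiv.Perm (Fin n)), invCount w = N →
    ∃ L : List ℕ, IsReducedWord n w L ∧ SuperYamanouchi L ∧
      ∀ b : ℕ, (∀ x : Fin n, (x:ℕ) ≤ b → w x = x) → ∀ l ∈ L, b < l := by
  intro N
  induction N using Nat.strong_induction_on with
  | _ N ih =>
    intro w hN
    by_cases hw : w = 1
    · subst hw
      refine ⟨[], ⟨by simp, rfl, by simp [invCount_one]⟩, ⟨[], rfl, by simp, by simp [List.Chain']⟩, ?_⟩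
      simp
    · obtain ⟨A, hA, hlt, hfix⟩ := exists_least_displaced hw
      have hMn : (A:ℕ) + ((w A : ℕ) - (A:ℕ)) < n := by
        have := (w A).isLt; omega
      set a : ℕ := (A:ℕ) with ha
      set M : ℕ := (w A : ℕ) - (A:ℕ) with hMdef
      have hM1 : 1 ≤ M := by omega
      obtain ⟨g1, g2, g3⟩ := runProd_spec n a M hMn
      have hAa : A = ⟨a, by omega⟩ := by apply Fin.ext; simp [ha]
      have hwA : w A = ⟨a + M, hMn⟩ := by apply Fin.ext; simp [ha, hMdef]; omega
      have hfix'' : ∀ x : Fin n, (x:ℕ) ≤ a → ((wordProd n (List.range' a M))⁻¹ * w) x = x := by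
        intro x hx
        rcases eq_or_lt_of_le hx with heq | hlt'
        · have hxA : x = A := by apply Fin.ext; simp [ha, heq]
          rw [hxA, Equiv.Perm.mul_apply, hwA, ← g3, Equiv.Perm.inv_apply_self, ← hAa]
        · have h1 : w x = x := hfix x hlt'
          rw [Equiv.Perm.mul_apply, h1, Equiv.Perm.inv_eq_iff_eq]
          exact (g1 x hlt').symm
      have hγw : wordProd n (List.range' a M) * ((wordProd n (List.range' a M))⁻¹ * w) = w :=
        mul_inv_cancel_left _ _
      have hcount : invCount w = invCount ((wordProd n (List.range' a M))⁻¹ * w) + M := by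
        conv_lhs => rw [← hγw]
        exact invCount_run_mul _ hfix'' M hMn
      have hlt'' : invCount ((wordProd n (List.range' a M))⁻¹ * w) < N := by omega
      obtain ⟨L'', ⟨hval'', hprod'', hlen''⟩, ⟨R'', hflat'', hruns'', hheads''⟩, hbound''⟩ :=
        ih _ hlt'' ((wordProd n (List.range' a M))⁻¹ * w) rfl
      have hbig : ∀ l ∈ L'', a < l := hbound'' a hfix''
      refine ⟨L'' ++ List.range' a M, ⟨?_, ?_, ?_⟩,
        ⟨R'' ++ [List.range' a M], ?_, ?_, ?_⟩, ?_⟩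
      · intro l hl
        rcases List.mem_append.mp hl with h | h
        · exact hval'' l h
        · rw [List.mem_range'_1] at h; omega
      · rw [wordProd_append, hprod'']
        exact hγw
      · rw [List.length_append, hlen'', List.length_range']
        omega
      · rw [List.flatten_append, hflat'']
        simp
      · intro r hr
        rcases List.mem_append.mp hr with h | h
        · exact hruns'' r h
        · rw [List.mem_singleton] at h
          subst h
          constructor
          · exact range'_ne_nil hM1
          · exact range'_chain a M
      · rw [List.map_append]
        rw [List.Chain', List.isChain_append]
        refine ⟨hheads'', by simp, ?_⟩
        intro x hx y hy
        simp only [List.map_cons, List.map_nil, List.head?_cons, Option.mem_def,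
          Option.some.injEq] at hy
        have hy' : y = a := by rw [← hy, headD_range' hM1]
        subst hy'
        -- x is the headD of the last run of R''
        rw [getLast?_map'] at hx
        simp only [Option.mem_def, Option.map_eq_some_iff] at hx
        obtain ⟨q, hq1, hq2⟩ := hx
        have hqmem : q ∈ R'' := getLast?_mem' hq1
        obtain ⟨hqne, hqchain⟩ := hruns'' q hqmem
        have hhead : q.headD 0 ∈ q := by
          cases q with
          | nil => exact absurd rfl hqne
          | cons c t => simp
        have hmemL : q.headD 0 ∈ L'' := by
          rw [← hflat'']
          exact List.mem_flatten.mpr ⟨q, hqmem, hhead⟩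
        rw [← hq2]
        exact hbig _ hmemL
      · intro b hb l hl
        have hba : b < a := by
          by_contra hc
          push_neg at hc
          exact hA (hb A (by omega))
        rcases List.mem_append.mp hl with h | h
        · have := hbig l h; omega
        · rw [List.mem_range'_1] at h; omega

lemma SY_struct {n : ℕ} {w : Equiv.Perm (Fin n)} {L : List ℕ}
    (hred : IsReducedWord n w L) (hsy : SuperYamanouchi L) (hL : L ≠ []) :
    ∃ (L'' : List ℕ) (a m : ℕ),
      L = L'' ++ List.range' a (m + 1) ∧
      a + m + 1 < n ∧
      (∀ x : Fin n, (x:ℕ) < a → w x = x) ∧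
      (∀ hA : a < n, ((w ⟨a, hA⟩ : Fin n) : ℕ) = a + m + 1) ∧
      IsReducedWord n ((wordProd n (List.range' a (m + 1)))⁻¹ * w) L'' ∧
      SuperYamanouchi L'' := by
  obtain ⟨hval, hprod, hlen⟩ := hred
  obtain ⟨R, hflat, hruns, hheads⟩ := hsy
  rcases List.eq_nil_or_concat R with hR | ⟨R', r, hR⟩
  · subst hR; exact absurd (by simpa using hflat.symm) hL
  rw [List.concat_eq_append] at hR
  subst hR
  obtain ⟨hrne, hrchain⟩ := hruns r (by simp)
  rcases r with _ | ⟨b, t⟩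
  · exact absurd rfl hrne
  have hrr : b :: t = List.range' b (t.length + 1) := run_eq_range' t b hrchain
  rw [List.flatten_append] at hflat
  simp only [List.flatten_cons, List.flatten_nil, List.append_nil] at hflat
  -- heads
  rw [List.map_append] at hheads
  have hpair := (List.isChain_iff_pairwise.mp hheads)
  rw [List.pairwise_append] at hpair
  obtain ⟨hpair', _, hcross⟩ := hpair
  have hbig : ∀ l ∈ R'.flatten, b < l := by
    intro l hl
    obtain ⟨q, hqR, hlq⟩ := List.mem_flatten.mp hl
    obtain ⟨hqne, hqchain⟩ := hruns q (by simp [hqR])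
    rcases q with _ | ⟨c, s⟩
    · exact absurd rfl hqne
    have hq : c :: s = List.range' c (s.length + 1) := run_eq_range' s c hqchain
    have hcl : c ≤ l := by
      rw [hq, List.mem_range'_1] at hlq
      omega
    have hbc : b < c := by
      have := hcross (c) (by simp; exact ⟨_, hqR, rfl⟩) b (by simp)
      simpa using this
    omega
  -- letters of L are ≥ b
  have hge : ∀ l ∈ L, b ≤ l := by
    intro l hl
    rw [← hflat] at hl
    rcases List.mem_append.mp hl with h | h
    · exact le_of_lt (hbig l h)
    · rw [hrr, List.mem_range'_1] at h; omega
  have hfixlow : ∀ x : Fin n, (x:ℕ) < b → w x = x := by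
    intro x hx
    rw [← hprod]
    rcases Nat.eq_zero_or_pos b with hb0 | hb1
    · omega
    · exact wordProd_fix (b := b - 1) (fun l hl => by have := hge l hl; omega) x (by omega)
  have hfix'' : ∀ x : Fin n, (x:ℕ) ≤ b → wordProd n R'.flatten x = x :=
    wordProd_fix hbig
  have hbmem : b + t.length ∈ L := by
    rw [← hflat]
    apply List.mem_append.mpr
    right
    rw [hrr, List.mem_range'_1]
    omega
  have hbn : b + t.length + 1 < n := hval _ hbmem
  have hprodsplit : w = wordProd n (List.range' b (t.length + 1)) * wordProd n R'.flatten := by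
    rw [← hprod, ← hflat, ← hrr, wordProd_append, hrr]
  obtain ⟨g1, g2, g3⟩ := runProd_spec n b (t.length + 1) (by omega)
  have hcount : invCount w = invCount (wordProd n R'.flatten) + (t.length + 1) := by
    rw [hprodsplit]
    exact invCount_run_mul _ hfix'' (t.length + 1) (by omega)
  refine ⟨R'.flatten, b, t.length, ?_, hbn, hfixlow, ?_, ⟨?_, ?_, ?_⟩, ⟨R', rfl, ?_, ?_⟩⟩
  · rw [← hflat, hrr]
  · intro hA
    have : w ⟨b, hA⟩ = ⟨b + (t.length + 1), by omega⟩ := by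
      rw [hprodsplit, Equiv.Perm.mul_apply, hfix'' ⟨b, hA⟩ (le_refl b)]
      exact g3
    rw [this]
    simp only [Fin.val_mk]
    omega
  · intro l hl
    apply hval
    rw [← hflat]
    exact List.mem_append.mpr (Or.inl hl)
  · rw [hprodsplit, inv_mul_cancel_left]
  · have hlenL : L.length = R'.flatten.length + (t.length + 1) := by
      rw [← hflat]
      simp
    have : invCount ((wordProd n (List.range' b (t.length + 1)))⁻¹ * w)
        = invCount (wordProd n R'.flatten) := by
      rw [hprodsplit, inv_mul_cancel_left]
    rw [this]
    omega
  · intro q hq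
    exact hruns q (by simp [hq])
  · exact (List.isChain_append.mp hheads).1

lemma uniqSY (n : ℕ) : ∀ (N : ℕ) (w : Equiv.Perm (Fin n)) (L M : List ℕ), invCount w = N →
    IsReducedWord n w L → SuperYamanouchi L → IsReducedWord n w M → SuperYamanouchi M →
    L = M := by
  intro N
  induction N using Nat.strong_induction_on with
  | _ N ih =>
    intro w L M hN hrL hsL hrM hsM
    by_cases hL : L = []
    · have : M.length = 0 := by
        rw [hrM.2.2, ← hrL.2.2, hL]
        rfl
      rw [hL, List.length_eq_zero_iff.mp this]
    · have hM : M ≠ [] := by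
        intro h
        apply hL
        have : L.length = 0 := by
          rw [hrL.2.2, ← hrM.2.2, h]
          rfl
        exact List.length_eq_zero_iff.mp this
      obtain ⟨L'', a, m, hLeq, hmn, hfixL, hwaL, hredL'', hsyL''⟩ := SY_struct hrL hsL hL
      obtain ⟨M'', a', m', hMeq, hmn', hfixM, hwaM, hredM'', hsyM''⟩ := SY_struct hrM hsM hM
      have haa : a = a' := by
        rcases lt_trichotomy a a' with h | h | h
        · exfalso
          have h1 : w ⟨a, by omega⟩ = ⟨a, by omega⟩ := hfixM ⟨a, by omega⟩ h
          have h2 := hwaL (by omega)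
          rw [h1] at h2
          simp only [Fin.val_mk] at h2
          omega
        · exact h
        · exfalso
          have h1 : w ⟨a', by omega⟩ = ⟨a', by omega⟩ := hfixL ⟨a', by omega⟩ h
          have h2 := hwaM (by omega)
          rw [h1] at h2
          simp only [Fin.val_mk] at h2
          omega
      subst haa
      have hmm : m = m' := by
        have h1 := hwaL (by omega)
        have h2 := hwaM (by omega)
        omega
      subst hmm
      have hcnt : invCount ((wordProd n (List.range' a (m + 1)))⁻¹ * w) < N := by
        have h1 : L''.length = invCount ((wordProd n (List.range' a (m + 1)))⁻¹ * w) :=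
          hredL''.2.2
        have h2 : L.length = N := by rw [hrL.2.2, hN]
        have h3 : L.length = L''.length + (m + 1) := by
          rw [hLeq]; simp
        omega
      have heq := ih _ hcnt _ L'' M'' rfl hredL'' hsyL'' hredM'' hsyM''
      rw [hLeq, hMeq, heq]

/-- For every permutation `w` there is a unique super-Yamanouchi reduced word. -/
theorem exists_unique_superYamanouchi_reduced_word (n : ℕ) (w : Equiv.Perm (Fin n)) :
    ∃! L : List ℕ, IsReducedWord n w L ∧ SuperYamanouchi L := by
  obtain ⟨L, h1, h2, _⟩ := existsSY n (invCount w) w rfl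
  exact ⟨L, ⟨h1, h2⟩, fun M hM =>
    uniqSY n (invCount w) w M L rfl hM.1 hM.2 h1 h2⟩
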